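/- arXiv:1206.0955 — 2 statements merged into one kernel-verified Lean document; each statement's English description precedes it below -/
import Mathlib

section
/- Let H be a Borel subgroup of the real numbers with H ≠ ℝ. Then for any ε > 0 there exists p with 0 < p < ε such that the only integer multiple of p lying in H is 0 (i.e., ℤp ∩ H = {0}). -/
open MeasureTheory Set Pointwise

lemma volume_of_proper_borel_subgroup (H : AddSubgroup ℝ)
    (hBorel : MeasurableSet (H : Set ℝ)) (hne : (H : Set ℝ) ≠ Set.univ) :
    volume (H : Set ℝ) = 0 := by
  by_contra h
  have hpos : 0 < volume (H : Set ℝ) := pos_iff_ne_zero.mpr h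
  have hnhds : (H : Set ℝ) - (H : Set ℝ) ∈ nhds (0 : ℝ) :=
    MeasureTheory.Measure.sub_mem_nhds_zero_of_addHaar_pos volume (H : Set ℝ) hBorel hpos
  have hsub : (H : Set ℝ) - (H : Set ℝ) ⊆ (H : Set ℝ) := by
    rintro x ⟨a, ha, b, hb, rfl⟩
    exact H.sub_mem ha hb
  have hHnhds : (H : Set ℝ) ∈ nhds (0 : ℝ) := Filter.mem_of_superset hnhds hsub
  obtain ⟨δ, hδ, hball⟩ := Metric.mem_nhds_iff.mp hHnhds
  apply hne
  ext x
  simp only [Set.mem_univ, iff_true]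
  obtain ⟨n, hn⟩ := exists_nat_gt (|x| / (δ / 2))
  have hn0 : 0 < (n : ℝ) + 1 := by positivity
  have hx : x = (n + 1 : ℕ) • (x / (n + 1)) := by
    rw [nsmul_eq_mul]; push_cast
    field_simp
  rw [hx]
  apply AddSubgroup.nsmul_mem
  apply hball
  simp only [Metric.mem_ball, Real.dist_eq, sub_zero, abs_div]
  have h1 : |x| < (n : ℝ) * (δ / 2) := (div_lt_iff₀ (by positivity)).mp hn
  have hnn : (0 : ℝ) ≤ (n : ℝ) := Nat.cast_nonneg n
  have habs : |((n : ℝ) + 1)| = (n : ℝ) + 1 := abs_of_pos hn0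
  rw [habs, div_lt_iff₀ hn0]
  nlinarith

theorem borel_proper_subgroup_exists_free_generator
    (H : AddSubgroup ℝ) (hBorel : MeasurableSet (H : Set ℝ))
    (hne : (H : Set ℝ) ≠ Set.univ) :
    ∀ ε : ℝ, 0 < ε → ∃ p : ℝ, 0 < p ∧ p < ε ∧ ∀ n : ℤ, (n : ℝ) * p ∈ H → n = 0 := by
  intro ε hε
  have hH0 : volume (H : Set ℝ) = 0 := volume_of_proper_borel_subgroup H hBorel hne
  set N : Set ℝ := ⋃ n : {n : ℤ // n ≠ 0}, (fun p : ℝ => ((n : ℤ) : ℝ) * p) ⁻¹' (H : Set ℝ)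
    with hN
  have hNnull : volume N = 0 := by
    apply measure_iUnion_null
    rintro ⟨n, hn⟩
    have hn' : ((n : ℝ)) ≠ 0 := Int.cast_ne_zero.mpr hn
    rw [Real.volume_preimage_mul_left hn', hH0, mul_zero]
  have hIoo : volume (Set.Ioo 0 ε) ≠ 0 := by
    rw [Real.volume_Ioo]
    simpa using hε
  have hdiff : volume (Set.Ioo 0 ε \ N) ≠ 0 := by
    rwa [measure_diff_null hNnull]
  obtain ⟨p, ⟨hp1, hp2⟩, hpN⟩ := nonempty_of_measure_ne_zero hdiff
  refine ⟨p, hp1, hp2, fun n hnp => ?_⟩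
  by_contra hn
  exact hpN (Set.mem_iUnion.mpr ⟨⟨n, hn⟩, hnp⟩)
end

section
/- Let Y and X be measurable spaces, S : Y → Y and the flow built under a ceiling function r : Y → [R₁, R₂] with 0 < R₁ ≤ r(y) < R₂. For d₁, d₂ ∈ Z¹(ℤ ⋉ Y) (unitary 𝕋-valued 1-cocycles of the induced ℤ-action on Y) define p*(d)(t,x) := d(N(t,x), π(x)) where N(t,x) ∈ ℤ is the number of times the flow orbit of x crosses the base up to time t and π is the projection to the base. Define metrics ρ_X(c₁,c₂) := max_{0 ≤ t < R₁} ∫_X |c₁(t,x) − c₂(t,x)| dμ(x) and ρ_Y(d₁,d₂) := ∫_Y |d₁(1,y) − d₂(1,y)| dν(y). Then ρ_X(p*(d₁), p*(d₂)) ≤ R₂ · ρ_Y(d₁, d₂). In particular, p* is continuous for these metrics. -/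
open MeasureTheory

theorem induced_cocycle_metric_estimate
    {Y : Type*} [MeasurableSpace Y] (ν : Measure Y) [IsProbabilityMeasure ν]
    (S : Y ≃ᵐ Y)
    (R₁ R₂ : ℝ) (hR₁ : 0 < R₁) (r : Y → ℝ) (hrm : Measurable r)
    (hr : ∀ y, R₁ ≤ r y ∧ r y < R₂)
    (d₁ d₂ : ℤ → Y → ℂ)
    (hm₁ : ∀ k, Measurable (d₁ k)) (hm₂ : ∀ k, Measurable (d₂ k))
    (hT₁ : ∀ k y, ‖d₁ k y‖ = 1) (hT₂ : ∀ k y, ‖d₂ k y‖ = 1)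
    (hcoc₁ : ∀ (m n : ℤ) (y : Y), d₁ (m + n) y = d₁ m ((S.toEquiv ^ n) y) * d₁ n y)
    (hcoc₂ : ∀ (m n : ℤ) (y : Y), d₂ (m + n) y = d₂ m ((S.toEquiv ^ n) y) * d₂ n y) :
    ∀ t : ℝ, 0 ≤ t → t < R₁ →
      (∫ p in {p : Y × ℝ | 0 ≤ p.2 ∧ p.2 < r p.1},
          ‖d₁ (if r p.1 ≤ p.2 + t then 1 else 0) p.1 -
            d₂ (if r p.1 ≤ p.2 + t then 1 else 0) p.1‖ ∂(ν.prod volume))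
        ≤ R₂ * ∫ y, ‖d₁ 1 y - d₂ 1 y‖ ∂ν := by
  intro t ht htR
  -- Y is nonempty since ν is a probability measure
  have hne : Nonempty Y := by
    by_contra h
    rw [not_nonempty_iff] at h
    have h1 : ν Set.univ = 1 := measure_univ
    rw [Set.univ_eq_empty_iff.mpr h, measure_empty] at h1
    exact zero_ne_one h1
  obtain ⟨y₀⟩ := hne
  have hR₂ : 0 < R₂ := lt_of_lt_of_le hR₁ (le_of_lt (lt_of_le_of_lt (hr y₀).1 (hr y₀).2))
  -- cocycles at 0 equal 1
  have h0 : ∀ (d : ℤ → Y → ℂ), (∀ k y, ‖d k y‖ = 1) →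
      (∀ (m n : ℤ) (y : Y), d (m + n) y = d m ((S.toEquiv ^ n) y) * d n y) →
      ∀ y, d 0 y = 1 := by
    intro d hT hcoc y
    have h := hcoc 0 0 y
    simp only [add_zero, zpow_zero, Equiv.Perm.coe_one, id_eq] at h
    have hnz : d 0 y ≠ 0 := by
      intro hz; have := hT 0 y; rw [hz] at this; simp at this
    exact (mul_left_cancel₀ hnz (by rw [mul_one, ← h])).symm
  have h0₁ := h0 d₁ hT₁ hcoc₁
  have h0₂ := h0 d₂ hT₂ hcoc₂
  set F : Y → ℝ := fun y => ‖d₁ 1 y - d₂ 1 y‖ with hF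
  have hFm : Measurable F := ((hm₁ 1).sub (hm₂ 1)).norm
  have hF0 : ∀ y, 0 ≤ F y := fun y => norm_nonneg _
  have hFb : ∀ y, F y ≤ 2 := by
    intro y
    calc F y ≤ ‖d₁ 1 y‖ + ‖d₂ 1 y‖ := norm_sub_le _ _
    _ = 2 := by rw [hT₁, hT₂]; norm_num
  -- rewrite the integrand
  have hg_eq : ∀ p : Y × ℝ,
      ‖d₁ (if r p.1 ≤ p.2 + t then 1 else 0) p.1 -
        d₂ (if r p.1 ≤ p.2 + t then 1 else 0) p.1‖ =
      if r p.1 ≤ p.2 + t then F p.1 else 0 := by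
    intro p
    split <;> simp [h0₁, h0₂, hF]
  simp only [hg_eq]
  set A : Set (Y × ℝ) := {p : Y × ℝ | 0 ≤ p.2 ∧ p.2 < r p.1} with hA
  set B : Set (Y × ℝ) := Set.univ ×ˢ Set.Ico (0:ℝ) R₂ with hB
  have hBmeas : MeasurableSet B := MeasurableSet.univ.prod measurableSet_Ico
  have hAmeas : MeasurableSet A := by
    apply MeasurableSet.inter
    · exact measurable_snd measurableSet_Ici
    · exact measurableSet_lt measurable_snd (hrm.comp measurable_fst)
  have hAB : A ⊆ B := by
    rintro ⟨y, h⟩ ⟨h1, h2⟩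
    exact ⟨Set.mem_univ _, h1, lt_trans h2 (hr y).2⟩
  have hBfin : (ν.prod volume) B ≠ ⊤ := by
    rw [hB, Measure.prod_prod, measure_univ, one_mul, Real.volume_Ico]
    exact ENNReal.ofReal_ne_top
  -- integrability of F ∘ fst on B
  have hIB : IntegrableOn (fun p : Y × ℝ => F p.1) B (ν.prod volume) := by
    refine Measure.integrableOn_of_bounded hBfin
      (hFm.comp measurable_fst).aestronglyMeasurable (M := 2) ?_
    filter_upwards with p
    rw [Real.norm_eq_abs, abs_of_nonneg (hF0 _)]
    exact hFb _
  have hIA : IntegrableOn (fun p : Y × ℝ => F p.1) A (ν.prod volume) :=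
    hIB.mono_set hAB
  have hGm : Measurable (fun p : Y × ℝ => if r p.1 ≤ p.2 + t then F p.1 else 0) := by
    apply Measurable.ite _ (hFm.comp measurable_fst) measurable_const
    exact measurableSet_le (hrm.comp measurable_fst) (measurable_snd.add_const t)
  have hIGA : IntegrableOn (fun p : Y × ℝ => if r p.1 ≤ p.2 + t then F p.1 else 0) A
      (ν.prod volume) := by
    apply hIA.mono' hGm.aestronglyMeasurable
    filter_upwards with p
    rw [Real.norm_eq_abs]
    split
    · rw [abs_of_nonneg (hF0 _)]
    · simpa using hF0 p.1
  calc (∫ p in A, (if r p.1 ≤ p.2 + t then F p.1 else 0) ∂(ν.prod volume))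
      ≤ ∫ p in A, F p.1 ∂(ν.prod volume) := by
        apply setIntegral_mono_on hIGA hIA hAmeas
        intro p _
        split
        · exact le_refl _
        · exact hF0 _
    _ ≤ ∫ p in B, F p.1 ∂(ν.prod volume) := by
        apply setIntegral_mono_set hIB
        · filter_upwards with p using hF0 p.1
        · exact Filter.Eventually.of_forall hAB
    _ = R₂ * ∫ y, F y ∂ν := by
        have : (∫ p in B, F p.1 ∂(ν.prod volume)) =
            (∫ y in Set.univ, F y ∂ν) * ∫ h in Set.Ico (0:ℝ) R₂, (1:ℝ) := by
          rw [hB, ← setIntegral_prod_mul]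
          simp
        rw [this]
        simp [Real.volume_Ico, ENNReal.toReal_ofReal hR₂.le, mul_comm, hR₂.le]
end
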